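/- The p-Sylvester numbers of the triple (8, 21, 55) for p = 0, 1, 2, 3, 4 are 63, 123, 180, 219, and 242, respectively; i.e., exactly 63 nonnegative integers are nonrepresentable, exactly 123 have at most 1 representation, etc. -/

import Mathlib

/-- Number of representations of `n` as a nonnegative integer combination of `a`, `b`, `c`. -/
noncomputable def repCount (a b c : ℕ) (n : ℤ) : ℕ :=
  Nat.card {v : ℕ × ℕ × ℕ // (v.1 : ℤ) * a + v.2.1 * b + v.2.2 * c = n}

/-- `g` is the `p`-Frobenius number of `a, b, c`: the largest integer with at most `p`
representations. -/
def IsPFrob (p a b c : ℕ) (g : ℤ) : Prop :=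
  IsGreatest {n : ℤ | repCount a b c n ≤ p} g

/-- Lucas numbers. -/
def lucas : ℕ → ℕ
  | 0 => 2
  | 1 => 1
  | n + 2 => lucas n + lucas (n + 1)

/-- Computable representation count. -/
def f (n : ℕ) : ℕ :=
  ((Finset.range (n / 21 + 1) ×ˢ Finset.range (n / 55 + 1)).filter
    (fun v => 21 * v.1 + 55 * v.2 ≤ n ∧ (n - (21 * v.1 + 55 * v.2)) % 8 = 0)).card

/-- Solutions as a finset. -/
def S (n : ℕ) : Finset (ℕ × ℕ × ℕ) :=
  ((Finset.range (n / 8 + 1) ×ˢ Finset.range (n / 21 + 1) ×ˢ Finset.range (n / 55 + 1)).filter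
    (fun v => 8 * v.1 + 21 * v.2.1 + 55 * v.2.2 = n))

lemma mem_S (n : ℕ) (v : ℕ × ℕ × ℕ) :
    v ∈ S n ↔ 8 * v.1 + 21 * v.2.1 + 55 * v.2.2 = n := by
  obtain ⟨x, y, z⟩ := v
  simp only [S, Finset.mem_filter, Finset.mem_product, Finset.mem_range]
  constructor
  · rintro ⟨_, h⟩; exact h
  · intro h
    refine ⟨⟨?_, ?_, ?_⟩, h⟩ <;> omega

lemma repCount_eq (n : ℕ) : repCount 8 21 55 (n : ℤ) = f n := by
  rw [repCount]
  simp only [Nat.cast_ofNat]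
  have h1 : {v : ℕ × ℕ × ℕ // (v.1 : ℤ) * 8 + v.2.1 * 21 + v.2.2 * 55 = (n : ℤ)} ≃ S n := by
    refine Equiv.subtypeEquiv (Equiv.refl _) ?_
    intro v
    rw [mem_S]
    obtain ⟨x, y, z⟩ := v
    simp only [Equiv.refl_apply]
    constructor
    · intro h
      have : ((8 * x + 21 * y + 55 * z : ℕ) : ℤ) = (n : ℤ) := by push_cast; linarith
      exact_mod_cast this
    · intro h
      have : ((8 * x + 21 * y + 55 * z : ℕ) : ℤ) = (n : ℤ) := by exact_mod_cast h
      push_cast at this; linarith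
  rw [Nat.card_congr h1, Nat.card_eq_finsetCard]
  -- now show (S n).card = f n via bijection dropping the first coordinate
  rw [f]
  apply Finset.card_bij (fun v _ => v.2)
  · rintro ⟨x, y, z⟩ hv
    rw [mem_S] at hv
    dsimp only at hv
    simp only [Finset.mem_filter, Finset.mem_product, Finset.mem_range]
    refine ⟨⟨?_, ?_⟩, ?_, ?_⟩ <;> omega
  · rintro ⟨x, y, z⟩ hv ⟨x', y', z'⟩ hv' h
    rw [mem_S] at hv hv'
    dsimp only at hv hv' h
    simp only [Prod.mk.injEq] at h ⊢
    omega
  · rintro ⟨y, z⟩ hv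
    simp only [Finset.mem_filter, Finset.mem_product, Finset.mem_range] at hv
    obtain ⟨⟨hy, hz⟩, hle, hmod⟩ := hv
    refine ⟨⟨(n - (21 * y + 55 * z)) / 8, y, z⟩, ?_, rfl⟩
    rw [mem_S]
    dsimp only
    omega

lemma f_mono_8 (n : ℕ) : f n ≤ f (n + 8) := by
  apply Finset.card_le_card_of_injOn (fun v => v)
  · rintro ⟨y, z⟩ (hv : (y, z) ∈ (Finset.filter _ _ : Finset (ℕ × ℕ)))
    simp only [Finset.mem_coe, Finset.mem_filter, Finset.mem_product, Finset.mem_range] at hv ⊢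
    obtain ⟨⟨hy, hz⟩, hle, hmod⟩ := hv
    refine ⟨⟨?_, ?_⟩, ?_, ?_⟩ <;> omega
  · intro a _ b _ h; exact h

lemma f_tail : ∀ n, 5 ≤ f (289 + n) := by
  intro n
  induction n using Nat.strong_induction_on with
  | _ n ih =>
    rcases lt_or_ge n 8 with h | h
    · interval_cases n <;> decide
    · have h1 := ih (n - 8) (by omega)
      have h2 := f_mono_8 (289 + (n - 8))
      have h3 : 289 + (n - 8) + 8 = 289 + n := by omega
      rw [h3] at h2
      omega

lemma card_le (p : ℕ) (hp : p ≤ 4) :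
    Nat.card {n : ℕ | repCount 8 21 55 (n : ℤ) ≤ p} =
      ((Finset.range 289).filter (fun n => f n ≤ p)).card := by
  have hset : {n : ℕ | repCount 8 21 55 (n : ℤ) ≤ p} =
      ↑((Finset.range 289).filter (fun n => f n ≤ p)) := by
    ext n
    simp only [Set.mem_setOf_eq, Finset.coe_filter, Set.mem_setOf_eq, Finset.mem_range,
      repCount_eq]
    constructor
    · intro h
      refine ⟨?_, h⟩
      by_contra hn
      have h5 := f_tail (n - 289)
      have h6 : 289 + (n - 289) = n := by omega
      rw [h6] at h5
      omega
    · rintro ⟨_, h⟩; exact h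
  rw [hset, Nat.card_coe_set_eq, Set.ncard_coe_finset]

set_option maxRecDepth 100000 in
theorem stmt18 :
    Nat.card {n : ℕ | repCount 8 21 55 (n : ℤ) ≤ 0} = 63 ∧
    Nat.card {n : ℕ | repCount 8 21 55 (n : ℤ) ≤ 1} = 123 ∧
    Nat.card {n : ℕ | repCount 8 21 55 (n : ℤ) ≤ 2} = 180 ∧
    Nat.card {n : ℕ | repCount 8 21 55 (n : ℤ) ≤ 3} = 219 ∧
    Nat.card {n : ℕ | repCount 8 21 55 (n : ℤ) ≤ 4} = 242 := by
  refine ⟨?_, ?_, ?_, ?_, ?_⟩ <;>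
    rw [card_le _ (by norm_num)] <;> decide
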